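/- For N ≥ 2 and W ∈ (0, 1/2), trace(H_W^N) - trace((H_W^N)^2) ≤ C log N for an absolute constant C. Equivalently, ∑_{k=0}^{N-1} λ_k(1 - λ_k) ≤ C log N, where λ_0 ≥ λ_1 ≥ … ≥ λ_{N-1} are the eigenvalues of H_W^N. -/

import Mathlib

open Real

/-- The Dirichlet kernel `D_N(x) = sin(Nπx)/sin(πx)`. -/
noncomputable def dirichletKernel (N : ℕ) (x : ℝ) : ℝ :=
  Real.sin (N * Real.pi * x) / Real.sin (Real.pi * x)

/-- The integral kernel of the Toeplitz operator `H_W^N`. -/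
noncomputable def toeplitzKernel (N : ℕ) (W : ℝ) (x y : ℝ) : ℝ :=
  ∫ z in (-W)..W, dirichletKernel N (x - z) * dirichletKernel N (y - z)

open MeasureTheory intervalIntegral Finset



lemma abs_sin_nat_mul_le (n : ℕ) (x : ℝ) : |Real.sin (n * x)| ≤ n * |Real.sin x| := by
  induction n with
  | zero => simp
  | succ n ih =>
    have h : ((n:ℝ)+1) * x = n*x + x := by ring
    have t1 : |Real.sin (n*x) * Real.cos x| ≤ |Real.sin (n*x)| * 1 := by
      rw [abs_mul]; exact mul_le_mul_of_nonneg_left (Real.abs_cos_le_one x) (abs_nonneg _)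
    have t2 : |Real.cos (n*x) * Real.sin x| ≤ 1 * |Real.sin x| := by
      rw [abs_mul]; exact mul_le_mul_of_nonneg_right (Real.abs_cos_le_one _) (abs_nonneg _)
    rw [Nat.cast_succ, h, Real.sin_add]
    calc |Real.sin (n*x) * Real.cos x + Real.cos (n*x) * Real.sin x|
        ≤ |Real.sin (n*x) * Real.cos x| + |Real.cos (n*x) * Real.sin x| := abs_add_le _ _
      _ ≤ |Real.sin (n*x)| * 1 + 1 * |Real.sin x| := add_le_add t1 t2
      _ ≤ (n:ℝ) * |Real.sin x| + 1 * |Real.sin x| := by rw [mul_one]; gcongr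
      _ = ((n:ℝ)+1) * |Real.sin x| := by ring

lemma dk_abs_le (N : ℕ) (u : ℝ) : |dirichletKernel N u| ≤ N := by
  unfold dirichletKernel
  rcases eq_or_ne (Real.sin (Real.pi * u)) 0 with h | h
  · simp [h]
  · rw [abs_div, div_le_iff₀ (abs_pos.mpr h)]
    rw [show (N:ℝ) * Real.pi * u = N * (Real.pi * u) by ring]
    exact abs_sin_nat_mul_le N _

lemma dk_meas (N : ℕ) : Measurable (dirichletKernel N) :=
  (Real.continuous_sin.comp (by continuity)).measurable.div
    (Real.continuous_sin.comp (by continuity)).measurable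

lemma dk_neg (N : ℕ) (u : ℝ) : dirichletKernel N (-u) = dirichletKernel N u := by
  unfold dirichletKernel
  rw [show (N:ℝ) * Real.pi * -u = -(N * Real.pi * u) by ring,
    show Real.pi * -u = -(Real.pi * u) by ring, Real.sin_neg, Real.sin_neg, neg_div_neg_eq]

lemma dk_sq_periodic (N : ℕ) : Function.Periodic (fun u => (dirichletKernel N u)^2) 1 := by
  intro u
  simp only [dirichletKernel]
  have h1 : (N:ℝ) * Real.pi * (u+1) = N * Real.pi * u + N * Real.pi := by ring
  have h2 : Real.pi * (u+1) = Real.pi * u + Real.pi := by ring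
  have hc : Real.cos ((N:ℝ) * Real.pi) = (-1)^N := by
    simpa using Real.cos_nat_mul_pi_sub 0 N
  rw [h1, h2, Real.sin_add, Real.sin_add, Real.sin_nat_mul_pi, Real.sin_pi, Real.cos_pi, hc]
  simp only [mul_zero, zero_mul, add_zero, mul_neg_one, zero_add]
  rw [div_pow, div_pow, mul_pow, neg_sq]
  congr 1
  have : ((-1:ℝ)^N)^2 = 1 := by rw [← pow_mul, mul_comm, pow_mul]; simp
  rw [this, mul_one]


-- telescoping identity
lemma telescope (N : ℕ) (θ : ℝ) :
    (∑ j ∈ Finset.range N, Real.cos ((2*(j:ℝ)+1-N) * θ)) * Real.sin θ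
      = Real.sin (N * θ) := by
  have key : ∀ j : ℕ, Real.cos ((2*(j:ℝ)+1-N) * θ) * Real.sin θ
      = (Real.sin ((2*((j:ℝ)+1)-N)*θ) - Real.sin ((2*(j:ℝ)-N)*θ)) / 2 := by
    intro j
    have e1 : (2*((j:ℝ)+1)-N)*θ = (2*(j:ℝ)+1-N)*θ + θ := by ring
    have e2 : (2*(j:ℝ)-N)*θ = (2*(j:ℝ)+1-N)*θ - θ := by ring
    rw [e1, e2, Real.sin_add, Real.sin_sub]
    ring
  rw [Finset.sum_mul]
  calc (∑ j ∈ Finset.range N, Real.cos ((2*(j:ℝ)+1-N) * θ) * Real.sin θ)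
      = ∑ j ∈ Finset.range N,
        ((fun k : ℕ => Real.sin ((2*(k:ℝ)-N)*θ)) (j+1) - (fun k : ℕ => Real.sin ((2*(k:ℝ)-N)*θ)) j) / 2 := by
        refine Finset.sum_congr rfl fun j _ => ?_
        rw [key j]; push_cast; ring_nf
    _ = Real.sin (N*θ) := by
        rw [← Finset.sum_div, Finset.sum_range_sub (fun k : ℕ => Real.sin ((2*(k:ℝ)-N)*θ))]
        push_cast
        rw [show (2*(N:ℝ)-N)*θ = N*θ by ring, show (2*(0:ℝ)-N)*θ = -(N*θ) by ring, Real.sin_neg]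
        ring


lemma cosint (l : ℤ) (c : ℝ) :
    ∫ x in (-(1:ℝ)/2)..(1/2), Real.cos (2*(l:ℝ)*Real.pi*x + c)
      = if l = 0 then Real.cos c else 0 := by
  rcases eq_or_ne l 0 with h | h
  · simp [h]; norm_num
  · have hd : (2*(l:ℝ)*Real.pi) ≠ 0 := by
      have : (l:ℝ) ≠ 0 := Int.cast_ne_zero.mpr h
      positivity
    rw [if_neg h]
    rw [intervalIntegral.integral_comp_mul_add Real.cos hd c (a := (-(1:ℝ)/2)) (b := 1/2),
      integral_cos]
    rw [show 2*(l:ℝ)*Real.pi * (1/2) + c = c + l*Real.pi by ring,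
      show 2*(l:ℝ)*Real.pi * (-(1:ℝ)/2) + c = c - l*Real.pi by ring,
      Real.sin_add, Real.sin_sub, Real.sin_int_mul_pi]
    simp

lemma orth (N j k : ℕ) (z w : ℝ) :
    ∫ x in (-(1:ℝ)/2)..(1/2),
        Real.cos ((2*(j:ℝ)+1-N)*(Real.pi*(x-z))) * Real.cos ((2*(k:ℝ)+1-N)*(Real.pi*(x-w)))
      = (if k = j then Real.cos ((2*(j:ℝ)+1-N)*(Real.pi*(w-z))) else 0)/2
        + (if j+k+1 = N then Real.cos ((2*(j:ℝ)+1-N)*(Real.pi*(w-z))) else 0)/2 := by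
  set a : ℝ := 2*(j:ℝ)+1-N with ha
  set b : ℝ := 2*(k:ℝ)+1-N with hb
  have base : ∀ A B : ℝ, Real.cos A * Real.cos B = (Real.cos (A-B) + Real.cos (A+B))/2 := by
    intro A B; rw [Real.cos_sub, Real.cos_add]; ring
  have hpt : ∀ x : ℝ, Real.cos (a*(Real.pi*(x-z))) * Real.cos (b*(Real.pi*(x-w)))
      = (Real.cos (2*(((j:ℤ)-k : ℤ):ℝ)*Real.pi*x + (b*Real.pi*w - a*Real.pi*z))
        + Real.cos (2*(((j:ℤ)+k+1-N : ℤ):ℝ)*Real.pi*x + (-(a*Real.pi*z) - b*Real.pi*w)))/2 := by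
    intro x
    rw [base]
    congr 3
    · push_cast [ha, hb]; ring
    · push_cast [ha, hb]; ring
  rw [intervalIntegral.integral_congr (g := fun x =>
      (Real.cos (2*(((j:ℤ)-k : ℤ):ℝ)*Real.pi*x + (b*Real.pi*w - a*Real.pi*z))
        + Real.cos (2*(((j:ℤ)+k+1-N : ℤ):ℝ)*Real.pi*x + (-(a*Real.pi*z) - b*Real.pi*w)))/2)
      (fun x _ => hpt x)]
  have i1 : IntervalIntegrable (fun x => Real.cos (2*(((j:ℤ)-k : ℤ):ℝ)*Real.pi*x + (b*Real.pi*w - a*Real.pi*z))) volume (-(1:ℝ)/2) (1/2) :=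
    (Real.continuous_cos.comp (by continuity)).intervalIntegrable _ _
  have i2 : IntervalIntegrable (fun x => Real.cos (2*(((j:ℤ)+k+1-N : ℤ):ℝ)*Real.pi*x + (-(a*Real.pi*z) - b*Real.pi*w))) volume (-(1:ℝ)/2) (1/2) :=
    (Real.continuous_cos.comp (by continuity)).intervalIntegrable _ _
  simp only [intervalIntegral.integral_div]
  rw [intervalIntegral.integral_add i1 i2, cosint, cosint]
  have e1 : (if ((j:ℤ)-k : ℤ) = 0 then Real.cos (b*Real.pi*w - a*Real.pi*z) else 0)
      = (if k = j then Real.cos (a*(Real.pi*(w-z))) else 0) := by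
    by_cases h : k = j
    · subst h
      rw [if_pos (by omega), if_pos rfl]
      congr 1; ring
    · rw [if_neg (by omega), if_neg h]
  have e2 : (if ((j:ℤ)+k+1-N : ℤ) = 0 then Real.cos (-(a*Real.pi*z) - b*Real.pi*w) else 0)
      = (if j+k+1 = N then Real.cos (a*(Real.pi*(w-z))) else 0) := by
    by_cases h : j+k+1 = N
    · rw [if_pos (by omega), if_pos h]
      have hN : ((j:ℝ)+k+1) = N := by exact_mod_cast congrArg (Nat.cast : ℕ → ℝ) h
      have hba : b = -a := by rw [ha, hb]; linarith
      rw [hba, show -(a*Real.pi*z) - -a*Real.pi*w = a*(Real.pi*(w-z)) by ring]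
    · rw [if_neg (by omega), if_neg h]
  rw [e1, e2]
  ring


lemma dk_eq_sum (N : ℕ) {u : ℝ} (h : Real.sin (Real.pi*u) ≠ 0) :
    dirichletKernel N u = ∑ j ∈ Finset.range N, Real.cos ((2*(j:ℝ)+1-N) * (Real.pi*u)) := by
  unfold dirichletKernel
  rw [eq_comm, eq_div_iff h, show (N:ℝ) * Real.pi * u = N * (Real.pi*u) by ring]
  exact telescope N (Real.pi*u)

lemma sin_pi_ne {t : ℝ} (h : ∀ n : ℤ, t ≠ n) : Real.sin (Real.pi * t) ≠ 0 := by
  intro hs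
  rw [Real.sin_eq_zero_iff] at hs
  obtain ⟨n, hn⟩ := hs
  apply h n
  have h2 : Real.pi * t = Real.pi * n := by linarith
  exact mul_left_cancel₀ Real.pi_ne_zero h2

lemma key_identity (N : ℕ) {z w : ℝ} (h : Real.sin (Real.pi*(z-w)) ≠ 0) :
    ∫ x in (-(1:ℝ)/2)..(1/2), dirichletKernel N (x-z) * dirichletKernel N (x-w)
      = dirichletKernel N (z-w) := by
  have hwz : Real.sin (Real.pi*(w-z)) ≠ 0 := by
    intro h0
    apply h
    rw [show Real.pi*(z-w) = -(Real.pi*(w-z)) by ring, Real.sin_neg, h0, neg_zero]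
  set S : ℝ → ℝ := fun t => ∑ j ∈ Finset.range N, Real.cos ((2*(j:ℝ)+1-N) * (Real.pi*t)) with hS
  -- step 1 : a.e. replacement
  have step1 : ∫ x in (-(1:ℝ)/2)..(1/2), dirichletKernel N (x-z) * dirichletKernel N (x-w)
      = ∫ x in (-(1:ℝ)/2)..(1/2), S (x-z) * S (x-w) := by
    apply intervalIntegral.integral_congr_ae
    set A : Set ℝ := (Set.range fun n : ℤ => z + n) ∪ (Set.range fun n : ℤ => w + n) with hA
    have hAnull : volume A = 0 :=
      measure_union_null ((Set.countable_range _).measure_zero _)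
        ((Set.countable_range _).measure_zero _)
    refine MeasureTheory.ae_iff.mpr (measure_mono_null (fun x hx => ?_) hAnull)
    simp only [Set.mem_setOf_eq] at hx
    push_neg at hx
    obtain ⟨_, hne⟩ := hx
    by_contra hxA
    apply hne
    have hz : Real.sin (Real.pi*(x-z)) ≠ 0 := by
      apply sin_pi_ne
      intro n hn
      exact hxA (Or.inl ⟨n, show z + (n:ℝ) = x by linarith⟩)
    have hw : Real.sin (Real.pi*(x-w)) ≠ 0 := by
      apply sin_pi_ne
      intro n hn
      exact hxA (Or.inr ⟨n, show w + (n:ℝ) = x by linarith⟩)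
    rw [dk_eq_sum N hz, dk_eq_sum N hw]
  rw [step1]
  -- step 2 : expand the product of sums
  have step2 : ∀ x : ℝ, S (x-z) * S (x-w) = ∑ j ∈ Finset.range N, ∑ k ∈ Finset.range N,
      Real.cos ((2*(j:ℝ)+1-N)*(Real.pi*(x-z))) * Real.cos ((2*(k:ℝ)+1-N)*(Real.pi*(x-w))) := by
    intro x
    rw [hS]
    simp only
    rw [Finset.sum_mul_sum]
  rw [intervalIntegral.integral_congr (fun x _ => step2 x)]
  have int_jk : ∀ (j k : ℕ), IntervalIntegrable
      (fun x => Real.cos ((2*(j:ℝ)+1-N)*(Real.pi*(x-z))) * Real.cos ((2*(k:ℝ)+1-N)*(Real.pi*(x-w))))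
      volume (-(1:ℝ)/2) (1/2) := fun j k =>
    ((Real.continuous_cos.comp (by continuity)).mul
      (Real.continuous_cos.comp (by continuity))).intervalIntegrable _ _
  have swap1 := intervalIntegral.integral_finset_sum (μ := volume) (a := (-(1:ℝ)/2)) (b := 1/2)
    (s := Finset.range N)
    (f := fun j x => ∑ k ∈ Finset.range N,
      Real.cos ((2*(j:ℝ)+1-N)*(Real.pi*(x-z))) * Real.cos ((2*(k:ℝ)+1-N)*(Real.pi*(x-w))))
    (fun j _ => by
      have hsum := IntervalIntegrable.sum (Finset.range N)
        (f := fun k x => Real.cos ((2*(j:ℝ)+1-N)*(Real.pi*(x-z))) * Real.cos ((2*(k:ℝ)+1-N)*(Real.pi*(x-w))))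
        (μ := volume) (a := (-(1:ℝ)/2)) (b := 1/2)
        (fun k _ => int_jk j k)
      simpa [Finset.sum_fn] using hsum)
  rw [swap1]
  have main : ∀ j ∈ Finset.range N,
      (∫ x in (-(1:ℝ)/2)..(1/2), ∑ k ∈ Finset.range N,
        Real.cos ((2*(j:ℝ)+1-N)*(Real.pi*(x-z))) * Real.cos ((2*(k:ℝ)+1-N)*(Real.pi*(x-w))))
      = Real.cos ((2*(j:ℝ)+1-N)*(Real.pi*(w-z))) := by
    intro j hj
    rw [Finset.mem_range] at hj
    rw [intervalIntegral.integral_finset_sum (fun k _ => int_jk j k)]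
    rw [Finset.sum_congr rfl (fun k _ => orth N j k z w)]
    rw [Finset.sum_add_distrib]
    set C := Real.cos ((2*(j:ℝ)+1-N)*(Real.pi*(w-z))) with hC
    have s1 : ∑ k ∈ Finset.range N, (if k = j then C else 0)/2 = C/2 := by
      rw [← Finset.sum_div, Finset.sum_ite_eq' (Finset.range N) j (fun _ => C),
        if_pos (Finset.mem_range.mpr hj)]
    have s2 : ∑ k ∈ Finset.range N, (if j+k+1 = N then C else 0)/2 = C/2 := by
      have hcg : ∀ k ∈ Finset.range N, (if j+k+1 = N then C else 0) = (if k = N-1-j then C else 0) := by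
        intro k hk
        exact if_congr (by omega) rfl rfl
      rw [← Finset.sum_div, Finset.sum_congr rfl hcg,
        Finset.sum_ite_eq' (Finset.range N) (N-1-j) (fun _ => C),
        if_pos (Finset.mem_range.mpr (by omega))]
    rw [s1, s2]
    ring
  rw [Finset.sum_congr rfl main]
  have : ∑ j ∈ Finset.range N, Real.cos ((2*(j:ℝ)+1-N)*(Real.pi*(w-z))) = dirichletKernel N (w-z) :=
    (dk_eq_sum N hwz).symm
  rw [this, show w - z = -(z-w) by ring, dk_neg]


lemma finMeasIoc (a b : ℝ) : IsFiniteMeasure (volume.restrict (Set.Ioc a b)) :=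
  ⟨by rw [Measure.restrict_apply_univ]; exact measure_Ioc_lt_top⟩

/-- Swap for double interval integrals of bounded measurable functions. -/
lemma swapI {f : ℝ → ℝ → ℝ} {a b c d : ℝ} (hab : a ≤ b) (hcd : c ≤ d)
    (hm : Measurable (Function.uncurry f)) (C : ℝ) (hbd : ∀ x y, |f x y| ≤ C) :
    (∫ x in a..b, ∫ y in c..d, f x y) = ∫ y in c..d, ∫ x in a..b, f x y := by
  haveI := finMeasIoc a b
  haveI := finMeasIoc c d
  rw [intervalIntegral.integral_of_le hab, intervalIntegral.integral_of_le hcd]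
  simp_rw [intervalIntegral.integral_of_le hab, intervalIntegral.integral_of_le hcd]
  apply MeasureTheory.integral_integral_swap
  refine MeasureTheory.Integrable.mono' (integrable_const C)
    hm.aestronglyMeasurable (ae_of_all _ ?_)
  rintro ⟨x, y⟩
  exact hbd x y

/-- Measurability of a parametric interval integral. -/
lemma param_meas {g : (ℝ × ℝ) × ℝ → ℝ} (hg : Measurable g) {c d : ℝ} (hcd : c ≤ d) :
    Measurable (fun p : ℝ × ℝ => ∫ z in c..d, g (p, z)) := by
  have heq : (fun p : ℝ × ℝ => ∫ z in c..d, g (p, z))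
      = fun p : ℝ × ℝ => ∫ z, g (p, z) ∂(volume.restrict (Set.Ioc c d)) :=
    funext fun p => intervalIntegral.integral_of_le hcd
  rw [heq]
  exact (hg.stronglyMeasurable.integral_prod_right').measurable

lemma K_meas (N : ℕ) {W : ℝ} (hW : 0 ≤ W) :
    Measurable (Function.uncurry (toeplitzKernel N W)) := by
  have : Function.uncurry (toeplitzKernel N W)
      = fun p : ℝ × ℝ => ∫ z in (-W)..W, dirichletKernel N (p.1 - z) * dirichletKernel N (p.2 - z) := rfl
  rw [this]
  exact param_meas
    (((dk_meas N).comp ((measurable_fst.comp measurable_fst).sub measurable_snd)).mul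
      ((dk_meas N).comp (((measurable_snd.comp measurable_fst)).sub measurable_snd)))
    (by linarith : -W ≤ W)

lemma K_abs_le (N : ℕ) {W : ℝ} (hW : 0 ≤ W) (hW2 : W ≤ 1/2) (x y : ℝ) :
    |toeplitzKernel N W x y| ≤ (N:ℝ)^2 := by
  have h := intervalIntegral.norm_integral_le_of_norm_le_const
    (C := (N:ℝ)^2) (a := -W) (b := W)
    (f := fun z => dirichletKernel N (x - z) * dirichletKernel N (y - z)) ?_
  · rw [Real.norm_eq_abs] at h
    calc |toeplitzKernel N W x y| ≤ (N:ℝ)^2 * |W - (-W)| := h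
      _ ≤ (N:ℝ)^2 * 1 := by
          apply mul_le_mul_of_nonneg_left _ (by positivity)
          rw [abs_of_nonneg (by linarith)]
          linarith
      _ = (N:ℝ)^2 := mul_one _
  · intro z _
    rw [Real.norm_eq_abs, abs_mul, pow_two]
    exact mul_le_mul (dk_abs_le N _) (dk_abs_le N _) (abs_nonneg _) (Nat.cast_nonneg N)


lemma my_arctan_nonneg {t : ℝ} (ht : 0 ≤ t) : 0 ≤ Real.arctan t := by
  rcases eq_or_lt_of_le ht with h | h
  · simp [← h]
  · exact le_of_lt (by simpa [Real.arctan_zero] using Real.arctan_strictMono h)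

lemma my_arctan_le_self {t : ℝ} (ht : 0 ≤ t) : Real.arctan t ≤ t := by
  rcases eq_or_lt_of_le ht with h | h
  · simp [← h]
  · have h1 : Real.arctan t ∈ Set.Ioo (-(Real.pi/2)) (Real.pi/2) := Real.arctan_mem_Ioo t
    have h2 : 0 < Real.arctan t := by simpa [Real.arctan_zero] using Real.arctan_strictMono h
    have := Real.lt_tan h2 h1.2
    rw [Real.tan_arctan] at this
    linarith

lemma arctan_tail {t : ℝ} (ht : 0 ≤ t) : Real.pi/2 - Real.arctan t ≤ Real.pi/(1+t) := by
  rcases le_or_gt t 1 with h | h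
  · have h1 : 0 ≤ Real.arctan t := my_arctan_nonneg ht
    have h2 : Real.pi/2 ≤ Real.pi/(1+t) := by
      apply div_le_div_of_nonneg_left Real.pi_pos.le (by linarith) (by linarith)
    linarith
  · have ht0 : 0 < t := by linarith
    rw [← Real.arctan_inv_of_pos ht0]
    have h3 : Real.arctan t⁻¹ ≤ t⁻¹ := my_arctan_le_self (by positivity)
    have h2 : t⁻¹ ≤ Real.pi/(1+t) := by
      rw [inv_eq_one_div, div_le_div_iff₀ (by positivity) (by positivity)]
      nlinarith [Real.pi_gt_three]
    linarith

lemma dk_sq_le_half (N : ℕ) {v : ℝ} (h0 : 0 ≤ v) (h1 : v ≤ 1/2) :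
    (dirichletKernel N v)^2 ≤ 2*(N:ℝ)^2/(1+(2*N*v)^2) := by
  rcases eq_or_lt_of_le h0 with h | hv0
  · rw [← h]
    unfold dirichletKernel
    simp
  · have hsin : 2*v ≤ Real.sin (Real.pi*v) := by
      have h2 := Real.mul_le_sin (x := Real.pi*v) (by positivity) (by nlinarith [Real.pi_pos])
      have : 2/Real.pi * (Real.pi*v) = 2*v := by field_simp
      linarith [this ▸ h2]
    have hsinpos : 0 < Real.sin (Real.pi*v) := by linarith
    have hb1 : (dirichletKernel N v)^2 ≤ (N:ℝ)^2 := by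
      have hh := abs_sin_nat_mul_le N (Real.pi*v)
      have habs : |dirichletKernel N v| ≤ N := by
        unfold dirichletKernel
        rw [abs_div, div_le_iff₀ (abs_pos.mpr hsinpos.ne')]
        rw [show (N:ℝ) * Real.pi * v = N * (Real.pi * v) by ring]
        exact hh
      calc (dirichletKernel N v)^2 = |dirichletKernel N v|^2 := (sq_abs _).symm
        _ ≤ (N:ℝ)^2 := pow_le_pow_left₀ (abs_nonneg _) habs 2
    have hb2 : (dirichletKernel N v)^2 ≤ 1/(4*v^2) := by
      unfold dirichletKernel
      rw [div_pow]
      have hnum : Real.sin ((N:ℝ)*Real.pi*v)^2 ≤ 1 := by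
        rw [← sq_abs]
        nlinarith [Real.abs_sin_le_one ((N:ℝ)*Real.pi*v), abs_nonneg (Real.sin ((N:ℝ)*Real.pi*v))]
      have hden : 4*v^2 ≤ Real.sin (Real.pi*v)^2 := by nlinarith
      exact div_le_div₀ zero_le_one hnum (by positivity) hden
    rcases le_or_gt ((2*(N:ℝ)*v)^2) 1 with hc | hc
    · calc (dirichletKernel N v)^2 ≤ (N:ℝ)^2 := hb1
        _ ≤ 2*(N:ℝ)^2/(1+(2*N*v)^2) := by
          rw [le_div_iff₀ (by positivity)]
          nlinarith
    · calc (dirichletKernel N v)^2 ≤ 1/(4*v^2) := hb2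
        _ ≤ 2*(N:ℝ)^2/(1+(2*N*v)^2) := by
          rw [div_le_div_iff₀ (by positivity) (by positivity)]
          nlinarith [sq_nonneg ((N:ℝ)*v)]


lemma II_of_bdd {f : ℝ → ℝ} (hm : Measurable f) (C : ℝ) (hb : ∀ x, |f x| ≤ C) (a b : ℝ) :
    IntervalIntegrable f volume a b := by
  haveI := finMeasIoc a b
  haveI := finMeasIoc b a
  constructor <;>
    exact MeasureTheory.Integrable.mono' (integrable_const C) hm.aestronglyMeasurable
      (ae_of_all _ hb)

lemma claimA (N : ℕ) (W : ℝ) (hW0 : 0 < W) (hW2 : W < 1/2) :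
    (∫ x in (-(1:ℝ)/2)..(1/2), toeplitzKernel N W x x)
      = ∫ w in (-W)..W, (∫ v in (-(1:ℝ)/2)..(1/2), (dirichletKernel N v)^2) := by
  have hNW : -W ≤ W := by linarith
  have hI : (-(1:ℝ)/2) ≤ 1/2 := by norm_num
  have h1 : ∀ x : ℝ, toeplitzKernel N W x x
      = ∫ z in (-W)..W, (dirichletKernel N (x-z))^2 := by
    intro x
    unfold toeplitzKernel
    exact intervalIntegral.integral_congr (fun z _ => (pow_two _).symm)
  rw [intervalIntegral.integral_congr (fun x _ => h1 x)]
  rw [swapI hI hNW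
    (((dk_meas N).comp (measurable_fst.sub measurable_snd)).pow_const 2)
    ((N:ℝ)^2)
    (fun x z => by
      rw [abs_pow]
      exact pow_le_pow_left₀ (abs_nonneg _) (dk_abs_le N _) 2)]
  apply intervalIntegral.integral_congr
  intro z _
  show (∫ x in (-(1:ℝ)/2)..(1/2), (dirichletKernel N (x-z))^2)
      = ∫ v in (-(1:ℝ)/2)..(1/2), (dirichletKernel N v)^2
  have e1 : (∫ x in (-(1:ℝ)/2)..(1/2), (dirichletKernel N (x-z))^2)
      = ∫ v in (-(1:ℝ)/2 - z)..(1/2 - z), (dirichletKernel N v)^2 :=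
    intervalIntegral.integral_comp_sub_right (fun v => (dirichletKernel N v)^2) z
  rw [e1]
  have e2 := (dk_sq_periodic N).intervalIntegral_add_eq (-(1:ℝ)/2 - z) (-(1:ℝ)/2)
  rw [show (1:ℝ)/2 - z = (-(1:ℝ)/2 - z) + 1 by ring, show (1:ℝ)/2 = -(1:ℝ)/2 + 1 by ring] at *
  exact e2

/-- clean a.e.-congruence for interval integrals off a countable set -/
lemma int_congr_off_countable {f g : ℝ → ℝ} {a b : ℝ} {A : Set ℝ} (hA : A.Countable)
    (h : ∀ x, x ∉ A → f x = g x) :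
    ∫ x in a..b, f x = ∫ x in a..b, g x := by
  apply intervalIntegral.integral_congr_ae
  refine MeasureTheory.ae_iff.mpr (measure_mono_null (fun x hx => ?_) (hA.measure_zero _))
  simp only [Set.mem_setOf_eq] at hx
  push_neg at hx
  by_contra hxA
  exact hx.2 (h x hxA)

lemma claimB (N : ℕ) (W : ℝ) (hW0 : 0 < W) (hW2 : W < 1/2) :
    (∫ x in (-(1:ℝ)/2)..(1/2), ∫ y in (-(1:ℝ)/2)..(1/2), (toeplitzKernel N W x y)^2)
      = ∫ w in (-W)..W, (∫ z in (-W)..W, (dirichletKernel N (z-w))^2) := by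
  have hNW : -W ≤ W := by linarith
  have hI : (-(1:ℝ)/2) ≤ 1/2 := by norm_num
  have hWle : W ≤ 1/2 := le_of_lt hW2
  set D := dirichletKernel N with hD
  set J : ℝ → ℝ → ℝ := fun x w => ∫ z in (-W)..W, D (x-z) * D (z-w) with hJ
  have hDm : Measurable D := dk_meas N
  have hDb : ∀ u, |D u| ≤ N := dk_abs_le N
  have hKdef : ∀ x y, toeplitzKernel N W x y = ∫ w in (-W)..W, D (x-w) * D (y-w) :=
    fun _ _ => rfl
  have hJm : Measurable (Function.uncurry J) := by
    show Measurable (fun p : ℝ × ℝ => ∫ z in (-W)..W, D (p.1 - z) * D (z - p.2))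
    exact param_meas (g := fun q : (ℝ × ℝ) × ℝ => D (q.1.1 - q.2) * D (q.2 - q.1.2))
      ((hDm.comp ((measurable_fst.comp measurable_fst).sub measurable_snd)).mul
        (hDm.comp (measurable_snd.sub (measurable_snd.comp measurable_fst)))) hNW
  have hJb : ∀ x w, |J x w| ≤ (N:ℝ)^2 := by
    intro x w
    have h := intervalIntegral.norm_integral_le_of_norm_le_const
      (C := (N:ℝ)^2) (a := -W) (b := W)
      (f := fun z => D (x-z) * D (z-w)) ?_
    · rw [Real.norm_eq_abs] at h
      calc |J x w| ≤ (N:ℝ)^2 * |W - (-W)| := h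
        _ ≤ (N:ℝ)^2 * 1 := by
            apply mul_le_mul_of_nonneg_left _ (by positivity)
            rw [abs_of_nonneg (by linarith)]; linarith
        _ = (N:ℝ)^2 := mul_one _
    · intro z _
      rw [Real.norm_eq_abs, abs_mul, pow_two]
      exact mul_le_mul (hDb _) (hDb _) (abs_nonneg _) (Nat.cast_nonneg N)
  have hKm : Measurable (Function.uncurry (toeplitzKernel N W)) := K_meas N hW0.le
  have hKb : ∀ x y, |toeplitzKernel N W x y| ≤ (N:ℝ)^2 := K_abs_le N hW0.le hWle
  -- B2
  have hB2 : ∀ x w : ℝ,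
      (∫ y in (-(1:ℝ)/2)..(1/2), toeplitzKernel N W x y * D (y-w)) = J x w := by
    intro x w
    have e1 : ∀ y : ℝ, toeplitzKernel N W x y * D (y-w)
        = ∫ z in (-W)..W, D (x-z) * D (y-z) * D (y-w) := by
      intro y
      rw [hKdef x y, ← intervalIntegral.integral_mul_const]
    rw [intervalIntegral.integral_congr (fun y _ => e1 y)]
    have m1 : Measurable (Function.uncurry fun y z : ℝ => D (x-z) * D (y-z) * D (y-w)) := by
      show Measurable (fun p : ℝ × ℝ => D (x - p.2) * D (p.1 - p.2) * D (p.1 - w))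
      exact ((hDm.comp (measurable_const.sub measurable_snd)).mul
        (hDm.comp (measurable_fst.sub measurable_snd))).mul
        (hDm.comp (measurable_fst.sub measurable_const))
    rw [swapI hI hNW m1 ((N:ℝ)^3)
      (fun y z => by
        rw [abs_mul, abs_mul]
        calc |D (x-z)| * |D (y-z)| * |D (y-w)| ≤ (N:ℝ) * N * N := by
              gcongr <;> first | exact abs_nonneg _ | exact hDb _ | positivity
          _ = (N:ℝ)^3 := by ring)]
    have e2 : ∀ z : ℝ, (∫ y in (-(1:ℝ)/2)..(1/2), D (x-z) * D (y-z) * D (y-w))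
        = D (x-z) * ∫ y in (-(1:ℝ)/2)..(1/2), D (y-z) * D (y-w) := by
      intro z
      rw [← intervalIntegral.integral_const_mul]
      exact intervalIntegral.integral_congr (fun y _ => mul_assoc _ _ _)
    rw [intervalIntegral.integral_congr (fun z _ => e2 z)]
    apply int_congr_off_countable (A := Set.range fun n : ℤ => w + n)
      (Set.countable_range _)
    intro z hz
    have hsin : Real.sin (Real.pi * (z - w)) ≠ 0 := by
      apply sin_pi_ne
      intro n hn
      exact hz ⟨n, show w + (n:ℝ) = z by linarith⟩
    rw [key_identity N hsin]
  -- B1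
  have hB1 : ∀ x : ℝ, (∫ y in (-(1:ℝ)/2)..(1/2), (toeplitzKernel N W x y)^2)
      = ∫ w in (-W)..W, D (x-w) * J x w := by
    intro x
    have e1 : ∀ y : ℝ, (toeplitzKernel N W x y)^2
        = ∫ w in (-W)..W, toeplitzKernel N W x y * (D (x-w) * D (y-w)) := by
      intro y
      rw [pow_two]
      nth_rewrite 2 [hKdef x y]
      rw [← intervalIntegral.integral_const_mul]
    rw [intervalIntegral.integral_congr (fun y _ => e1 y)]
    have m2 : Measurable (Function.uncurry fun y w : ℝ =>
        toeplitzKernel N W x y * (D (x-w) * D (y-w))) := by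
      show Measurable (fun p : ℝ × ℝ =>
        toeplitzKernel N W x p.1 * (D (x - p.2) * D (p.1 - p.2)))
      exact (hKm.comp (measurable_const.prodMk measurable_fst)).mul
        ((hDm.comp (measurable_const.sub measurable_snd)).mul
          (hDm.comp (measurable_fst.sub measurable_snd)))
    rw [swapI hI hNW m2 ((N:ℝ)^4)
      (fun y w => by
        rw [abs_mul, abs_mul]
        calc |toeplitzKernel N W x y| * (|D (x-w)| * |D (y-w)|) ≤ (N:ℝ)^2 * ((N:ℝ) * N) := by
              gcongr <;> first | exact abs_nonneg _ | exact hDb _ | exact hKb _ _ | positivity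
          _ = (N:ℝ)^4 := by ring)]
    apply intervalIntegral.integral_congr
    intro w _
    show (∫ y in (-(1:ℝ)/2)..(1/2), toeplitzKernel N W x y * (D (x-w) * D (y-w)))
        = D (x-w) * J x w
    have e3 : ∀ y : ℝ, toeplitzKernel N W x y * (D (x-w) * D (y-w))
        = D (x-w) * (toeplitzKernel N W x y * D (y-w)) := fun y => by ring
    rw [intervalIntegral.integral_congr (fun y _ => e3 y),
      intervalIntegral.integral_const_mul, hB2 x w]
  -- B3
  rw [intervalIntegral.integral_congr (fun x _ => hB1 x)]
  have m3 : Measurable (Function.uncurry fun x w : ℝ => D (x-w) * J x w) := by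
    show Measurable (fun p : ℝ × ℝ => D (p.1 - p.2) * Function.uncurry J p)
    exact (hDm.comp (measurable_fst.sub measurable_snd)).mul hJm
  rw [swapI hI hNW m3 ((N:ℝ)^3)
    (fun x w => by
      rw [abs_mul]
      calc |D (x-w)| * |J x w| ≤ (N:ℝ) * (N:ℝ)^2 := by
            gcongr <;> first | exact abs_nonneg _ | exact hDb _ | exact hJb _ _ | positivity
        _ = (N:ℝ)^3 := by ring)]
  apply intervalIntegral.integral_congr
  intro w _
  show (∫ x in (-(1:ℝ)/2)..(1/2), D (x-w) * J x w) = ∫ z in (-W)..W, (D (z-w))^2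
  have e1 : ∀ x : ℝ, D (x-w) * J x w
      = ∫ z in (-W)..W, D (x-w) * (D (x-z) * D (z-w)) := by
    intro x
    rw [hJ]
    simp only
    rw [← intervalIntegral.integral_const_mul]
  rw [intervalIntegral.integral_congr (fun x _ => e1 x)]
  have m4 : Measurable (Function.uncurry fun x z : ℝ => D (x-w) * (D (x-z) * D (z-w))) := by
    show Measurable (fun p : ℝ × ℝ => D (p.1 - w) * (D (p.1 - p.2) * D (p.2 - w)))
    exact (hDm.comp (measurable_fst.sub measurable_const)).mul
      ((hDm.comp (measurable_fst.sub measurable_snd)).mul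
        (hDm.comp (measurable_snd.sub measurable_const)))
  rw [swapI hI hNW m4 ((N:ℝ)^3)
    (fun x z => by
      rw [abs_mul, abs_mul]
      calc |D (x-w)| * (|D (x-z)| * |D (z-w)|) ≤ (N:ℝ) * ((N:ℝ) * N) := by
            gcongr <;> first | exact abs_nonneg _ | exact hDb _ | positivity
        _ = (N:ℝ)^3 := by ring)]
  have e2 : ∀ z : ℝ, (∫ x in (-(1:ℝ)/2)..(1/2), D (x-w) * (D (x-z) * D (z-w)))
      = D (z-w) * ∫ x in (-(1:ℝ)/2)..(1/2), D (x-z) * D (x-w) := by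
    intro z
    rw [← intervalIntegral.integral_const_mul]
    exact intervalIntegral.integral_congr (fun x _ => by ring)
  rw [intervalIntegral.integral_congr (fun z _ => e2 z)]
  apply int_congr_off_countable (A := Set.range fun n : ℤ => w + n)
    (Set.countable_range _)
  intro z hz
  have hsin : Real.sin (Real.pi * (z - w)) ≠ 0 := by
    apply sin_pi_ne
    intro n hn
    exact hz ⟨n, show w + (n:ℝ) = z by linarith⟩
  rw [key_identity N hsin, pow_two]


lemma dk_sq_le (N : ℕ) {v : ℝ} (h0 : 0 ≤ v) (h1 : v ≤ 1) :
    (dirichletKernel N v)^2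
      ≤ 2*(N:ℝ)^2/(1+(2*N*v)^2) + 2*(N:ℝ)^2/(1+(2*N*(1-v))^2) := by
  rcases le_or_gt v (1/2) with h | h
  · have := dk_sq_le_half N h0 h
    have h2 : 0 ≤ 2*(N:ℝ)^2/(1+(2*N*(1-v))^2) := by positivity
    linarith
  · have hsq : (dirichletKernel N (1-v))^2 = (dirichletKernel N v)^2 := by
      have hper := dk_sq_periodic N (v-1)
      simp only at hper
      rw [show v - 1 + 1 = v by ring] at hper
      rw [hper, show v - 1 = -(1-v) by ring]
      unfold dirichletKernel
      rw [show (N:ℝ) * Real.pi * -(1-v) = -(N * Real.pi * (1-v)) by ring,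
        show Real.pi * -(1-v) = -(Real.pi * (1-v)) by ring, Real.sin_neg, Real.sin_neg,
        neg_div_neg_eq]
    have := dk_sq_le_half N (v := 1-v) (by linarith) (by linarith)
    rw [hsq] at this
    have h2 : 0 ≤ 2*(N:ℝ)^2/(1+(2*N*v)^2) := by positivity
    linarith

lemma pieceint (N : ℕ) (hN : 1 ≤ N) {T : ℝ} (hT : 0 ≤ T) :
    ∫ t in (0:ℝ)..T, (N:ℝ)*Real.pi/(1+2*N*t) = Real.pi/2 * Real.log (1+2*N*T) := by
  have hNR : (1:ℝ) ≤ N := by exact_mod_cast hN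
  have hc : (2*(N:ℝ)) ≠ 0 := by positivity
  have e1 : (fun t : ℝ => (N:ℝ)*Real.pi/(1+2*N*t))
      = fun t : ℝ => (N:ℝ)*Real.pi * ((fun u : ℝ => 1/u) (2*N*t + 1)) := by
    funext t
    simp only
    rw [mul_one_div, show (2*(N:ℝ)*t+1) = 1+2*N*t by ring]
  rw [e1, intervalIntegral.integral_const_mul,
    intervalIntegral.integral_comp_mul_add (fun u : ℝ => 1/u) hc 1]
  rw [show 2*(N:ℝ)*0+1 = 1 by ring]
  rw [integral_one_div (by
    rw [Set.uIcc_of_le (by nlinarith : (1:ℝ) ≤ 2*N*T+1)]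
    simp only [Set.mem_Icc, not_and]
    intro h0
    linarith)]
  rw [div_one, smul_eq_mul]
  rw [show (2*(N:ℝ)*T+1) = 1+2*N*T by ring]
  field_simp

lemma atanint (N : ℕ) (hN : 1 ≤ N) (a b : ℝ) :
    ∫ v in a..b, 2*(N:ℝ)^2/(1+(2*N*v)^2)
      = (N:ℝ)*(Real.arctan (2*N*b) - Real.arctan (2*N*a)) := by
  have hc : (2*(N:ℝ)) ≠ 0 := by
    have : (1:ℝ) ≤ N := by exact_mod_cast hN
    positivity
  have e1 : (fun v : ℝ => 2*(N:ℝ)^2/(1+(2*N*v)^2))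
      = fun v : ℝ => 2*(N:ℝ)^2 * ((fun u : ℝ => 1/(1+u^2)) (2*N*v)) := by
    funext v
    simp only
    rw [mul_one_div]
  rw [e1, intervalIntegral.integral_const_mul,
    intervalIntegral.integral_comp_mul_left (fun u : ℝ => 1/(1+u^2)) hc,
    integral_one_div_one_add_sq, smul_eq_mul]
  have : (1:ℝ) ≤ N := by exact_mod_cast hN
  field_simp

lemma atanint2 (N : ℕ) (hN : 1 ≤ N) (a b : ℝ) :
    ∫ v in a..b, 2*(N:ℝ)^2/(1+(2*N*(1-v))^2)
      = (N:ℝ)*(Real.arctan (2*N*(1-a)) - Real.arctan (2*N*(1-b))) := by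
  have := intervalIntegral.integral_comp_sub_left (a := a) (b := b)
    (fun t : ℝ => 2*(N:ℝ)^2/(1+(2*N*t)^2)) 1
  rw [this, atanint N hN]

lemma claimC (N : ℕ) (hN : 2 ≤ N) (W : ℝ) (hW0 : 0 < W) (hW2 : W < 1/2) :
    (∫ w in (-W)..W, (∫ v in (-(1:ℝ)/2)..(1/2), (dirichletKernel N v)^2))
      - (∫ w in (-W)..W, (∫ z in (-W)..W, (dirichletKernel N (z-w))^2))
      ≤ (4*Real.pi) * Real.log N := by
  have hN1 : 1 ≤ N := by omega
  have hNR : (1:ℝ) ≤ (N:ℝ) := by exact_mod_cast hN1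
  have hNR2 : (2:ℝ) ≤ (N:ℝ) := by exact_mod_cast hN
  have hNW : -W ≤ W := by linarith
  set D := dirichletKernel N with hD
  have hDm : Measurable D := dk_meas N
  have hIID : ∀ a b : ℝ, IntervalIntegrable (fun v => (D v)^2) volume a b := by
    intro a b
    apply II_of_bdd (hDm.pow_const 2) ((N:ℝ)^2) (fun x => ?_) a b
    rw [abs_pow]
    exact pow_le_pow_left₀ (abs_nonneg _) (dk_abs_le N _) 2
  set Φ : ℝ → ℝ := fun t => ∫ v in (0:ℝ)..t, (D v)^2 with hΦ
  have hΦc : Continuous Φ := intervalIntegral.continuous_primitive (fun a b => hIID a b) 0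
  have hsplit : ∀ a b : ℝ, ∫ v in a..b, (D v)^2 = Φ b - Φ a := by
    intro a b
    rw [hΦ]
    simp only
    exact (intervalIntegral.integral_interval_sub_left (hIID 0 b) (hIID 0 a)).symm
  set S : ℝ := ∫ v in (-(1:ℝ)/2)..(1/2), (D v)^2 with hS
  -- inner difference identity
  have hdiff : ∀ w : ℝ, S - (∫ z in (-W)..W, (D (z-w))^2)
      = Φ (1-W-w) - Φ (W-w) := by
    intro w
    have h1 : (∫ z in (-W)..W, (D (z-w))^2) = Φ (W-w) - Φ (-W-w) := by
      rw [intervalIntegral.integral_comp_sub_right (fun v => (D v)^2) w, hsplit]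
    have h2 : S = Φ (-W-w+1) - Φ (-W-w) := by
      rw [hS]
      have e2 := (dk_sq_periodic N).intervalIntegral_add_eq (-(1:ℝ)/2) (-W-w)
      rw [show -(1:ℝ)/2 + 1 = (1:ℝ)/2 by norm_num] at e2
      rw [e2, hsplit]
    rw [h1, h2, show -W-w+1 = 1-W-w by ring]
    ring
  -- integrability of w ↦ inner integral
  have hinnerc : Continuous (fun w : ℝ => ∫ z in (-W)..W, (D (z-w))^2) := by
    have : (fun w : ℝ => ∫ z in (-W)..W, (D (z-w))^2)
        = fun w => Φ (W-w) - Φ (-W-w) := by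
      funext w
      rw [intervalIntegral.integral_comp_sub_right (fun v => (D v)^2) w, hsplit]
    rw [this]
    exact (hΦc.comp (continuous_const.sub continuous_id)).sub
      (hΦc.comp (continuous_const.sub continuous_id))
  -- step: difference of integrals = integral of difference
  have hstep : (∫ w in (-W)..W, S) - (∫ w in (-W)..W, (∫ z in (-W)..W, (D (z-w))^2))
      = ∫ w in (-W)..W, (Φ (1-W-w) - Φ (W-w)) := by
    rw [← intervalIntegral.integral_sub intervalIntegrable_const
      (hinnerc.intervalIntegrable _ _)]
    exact intervalIntegral.integral_congr (fun w _ => hdiff w)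
  rw [hstep]
  -- pointwise bound on the integrand
  set bnd : ℝ → ℝ := fun w =>
    (N:ℝ)*Real.pi/(1+2*N*(W-w)) + (N:ℝ)*Real.pi/(1+2*N*(W+w)) with hbnd
  have hpt : ∀ w ∈ Set.Icc (-W) W, Φ (1-W-w) - Φ (W-w) ≤ bnd w := by
    intro w hw
    obtain ⟨hw1, hw2⟩ := hw
    have ha0 : 0 ≤ W - w := by linarith
    have hab : W - w ≤ 1-W-w := by linarith
    have hb1 : 1-W-w ≤ 1 := by linarith
    rw [← hsplit]
    set g : ℝ → ℝ := fun v => 2*(N:ℝ)^2/(1+(2*N*v)^2) + 2*(N:ℝ)^2/(1+(2*N*(1-v))^2) with hg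
    have c1 : Continuous (fun v : ℝ => 2*(N:ℝ)^2/(1+(2*N*v)^2)) :=
      continuous_const.div
        (continuous_const.add ((continuous_const.mul continuous_id).pow 2))
        (fun v => by positivity)
    have c2 : Continuous (fun v : ℝ => 2*(N:ℝ)^2/(1+(2*N*(1-v))^2)) :=
      continuous_const.div
        (continuous_const.add ((continuous_const.mul (continuous_const.sub continuous_id)).pow 2))
        (fun v => by positivity)
    have hgc : Continuous g := c1.add c2
    have h1 : ∫ v in (W-w)..(1-W-w), (D v)^2 ≤ ∫ v in (W-w)..(1-W-w), g v := by
      apply intervalIntegral.integral_mono_on hab (hIID _ _) (hgc.intervalIntegrable _ _)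
      intro v hv
      exact dk_sq_le N (by linarith [hv.1]) (by linarith [hv.2])
    have h2 : ∫ v in (W-w)..(1-W-w), g v
        = (N:ℝ)*(Real.arctan (2*N*(1-W-w)) - Real.arctan (2*N*(W-w)))
          + (N:ℝ)*(Real.arctan (2*N*(1-(W-w))) - Real.arctan (2*N*(1-(1-W-w)))) := by
      rw [hg]
      rw [intervalIntegral.integral_add
        (c1.intervalIntegrable _ _) (c2.intervalIntegrable _ _),
        atanint N hN1, atanint2 N hN1]
    have h3 : (N:ℝ)*(Real.arctan (2*N*(1-W-w)) - Real.arctan (2*N*(W-w)))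
        ≤ (N:ℝ)*Real.pi/(1+2*N*(W-w)) := by
      have t1 : Real.arctan (2*N*(1-W-w)) < Real.pi/2 := Real.arctan_lt_pi_div_two _
      have t2 := arctan_tail (t := 2*N*(W-w)) (by positivity)
      calc (N:ℝ)*(Real.arctan (2*N*(1-W-w)) - Real.arctan (2*N*(W-w)))
          ≤ (N:ℝ)*(Real.pi/(1+2*N*(W-w))) := by
            apply mul_le_mul_of_nonneg_left _ (by positivity)
            linarith
        _ = (N:ℝ)*Real.pi/(1+2*N*(W-w)) := by ring
    have h4 : (N:ℝ)*(Real.arctan (2*N*(1-(W-w))) - Real.arctan (2*N*(1-(1-W-w))))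
        ≤ (N:ℝ)*Real.pi/(1+2*N*(W+w)) := by
      have t1 : Real.arctan (2*N*(1-(W-w))) < Real.pi/2 := Real.arctan_lt_pi_div_two _
      have heq : 2*(N:ℝ)*(1-(1-W-w)) = 2*N*(W+w) := by ring
      have t2 := arctan_tail (t := 2*(N:ℝ)*(W+w)) (by
        have : (0:ℝ) ≤ W + w := by linarith
        positivity)
      rw [heq]
      calc (N:ℝ)*(Real.arctan (2*N*(1-(W-w))) - Real.arctan (2*N*(W+w)))
          ≤ (N:ℝ)*(Real.pi/(1+2*N*(W+w))) := by
            apply mul_le_mul_of_nonneg_left _ (by positivity)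
            linarith
        _ = (N:ℝ)*Real.pi/(1+2*N*(W+w)) := by ring
    rw [hbnd]
    simp only
    calc ∫ v in (W-w)..(1-W-w), (D v)^2 ≤ ∫ v in (W-w)..(1-W-w), g v := h1
      _ = _ := h2
      _ ≤ _ := add_le_add h3 h4
  -- integrate the bound
  have hco1 : ContinuousOn (fun w : ℝ => (N:ℝ)*Real.pi/(1+2*N*(W-w))) (Set.uIcc (-W) W) := by
    apply ContinuousOn.div continuousOn_const
      (continuous_const.add (continuous_const.mul
        (continuous_const.sub continuous_id))).continuousOn
    intro w hw
    rw [Set.uIcc_of_le hNW] at hw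
    have : 0 ≤ W - w := by linarith [hw.2]
    show (1:ℝ) + 2*N*(W-w) ≠ 0
    exact ne_of_gt (by nlinarith [mul_nonneg (by positivity : (0:ℝ) ≤ 2*N) this])
  have hco2 : ContinuousOn (fun w : ℝ => (N:ℝ)*Real.pi/(1+2*N*(W+w))) (Set.uIcc (-W) W) := by
    apply ContinuousOn.div continuousOn_const
      (continuous_const.add (continuous_const.mul
        (continuous_const.add continuous_id))).continuousOn
    intro w hw
    rw [Set.uIcc_of_le hNW] at hw
    have : 0 ≤ W + w := by linarith [hw.1]
    show (1:ℝ) + 2*N*(W+w) ≠ 0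
    exact ne_of_gt (by nlinarith [mul_nonneg (by positivity : (0:ℝ) ≤ 2*N) this])
  have hmono : (∫ w in (-W)..W, (Φ (1-W-w) - Φ (W-w)))
      ≤ ∫ w in (-W)..W, bnd w := by
    apply intervalIntegral.integral_mono_on hNW ?_ ?_ hpt
    · have : (fun w : ℝ => Φ (1-W-w) - Φ (W-w))
          = (fun w => Φ (1-W-w)) - fun w => Φ (W-w) := rfl
      exact ((hΦc.comp (continuous_const.sub continuous_id)).sub
        (hΦc.comp (continuous_const.sub continuous_id))).intervalIntegrable _ _
    · exact (hco1.add hco2).intervalIntegrable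
  -- compute the integral of the bound
  have hval : (∫ w in (-W)..W, bnd w) = Real.pi * Real.log (1+2*N*(2*W)) := by
    rw [hbnd]
    simp only
    rw [intervalIntegral.integral_add (hco1.intervalIntegrable) (hco2.intervalIntegrable)]
    have p1 : (∫ w in (-W)..W, (N:ℝ)*Real.pi/(1+2*N*(W-w)))
        = Real.pi/2 * Real.log (1+2*N*(2*W)) := by
      rw [intervalIntegral.integral_comp_sub_left (fun t : ℝ => (N:ℝ)*Real.pi/(1+2*N*t)) W,
        sub_self, show W - -W = 2*W by ring]
      exact pieceint N hN1 (by linarith)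
    have p2 : (∫ w in (-W)..W, (N:ℝ)*Real.pi/(1+2*N*(W+w)))
        = Real.pi/2 * Real.log (1+2*N*(2*W)) := by
      rw [intervalIntegral.integral_comp_add_left (fun t : ℝ => (N:ℝ)*Real.pi/(1+2*N*t)) W,
        show W + -W = 0 by ring, show W + W = 2*W by ring]
      exact pieceint N hN1 (by linarith)
    rw [p1, p2]
    ring
  -- final numeric estimate
  have hfin : Real.pi * Real.log (1+2*N*(2*W)) ≤ (4*Real.pi) * Real.log N := by
    have h1 : (1:ℝ)+2*N*(2*W) ≤ (N:ℝ)^4 := by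
      have e1 : (2:ℝ)*N*(2*W) ≤ 2*N := by nlinarith
      have e2 : (1:ℝ)+2*N ≤ (N:ℝ)^4 := by
        nlinarith [sq_nonneg ((N:ℝ)^2 - 2), sq_nonneg ((N:ℝ) - 1), hNR2]
      linarith
    have h2 : Real.log (1+2*N*(2*W)) ≤ Real.log ((N:ℝ)^4) := by
      apply Real.log_le_log (by positivity) h1
    rw [Real.log_pow] at h2
    calc Real.pi * Real.log (1+2*N*(2*W)) ≤ Real.pi * ((4:ℕ) * Real.log N) := by
          apply mul_le_mul_of_nonneg_left _ Real.pi_pos.le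
          exact_mod_cast h2
      _ = (4*Real.pi) * Real.log N := by push_cast; ring
  calc (∫ w in (-W)..W, (Φ (1-W-w) - Φ (W-w))) ≤ ∫ w in (-W)..W, bnd w := hmono
    _ = Real.pi * Real.log (1+2*N*(2*W)) := hval
    _ ≤ (4*Real.pi) * Real.log N := hfin


/-- `trace(H_W^N) - trace((H_W^N)²) ≤ C log N` for an absolute constant `C`,
where `trace(H_W^N) = ∫_I K(x,x) dx` and `trace((H_W^N)²) = ∫_I ∫_I |K(x,y)|² dx dy`.
Equivalently, `∑_{k<N} λ_k (1 - λ_k) ≤ C log N` for the eigenvalues of `H_W^N`. -/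
theorem toeplitz_trace_minus_trace_sq_bound :
    ∃ C : ℝ, 0 < C ∧ ∀ (N : ℕ), 2 ≤ N → ∀ W : ℝ, W ∈ Set.Ioo (0:ℝ) (1/2) →
      (∫ x in (-(1:ℝ)/2)..(1/2), toeplitzKernel N W x x)
        - (∫ x in (-(1:ℝ)/2)..(1/2), ∫ y in (-(1:ℝ)/2)..(1/2), (toeplitzKernel N W x y)^2)
        ≤ C * Real.log N := by
  refine ⟨4*Real.pi, by positivity, ?_⟩
  intro N hN W hWm
  have hW0 : 0 < W := hWm.1
  have hW2 : W < 1/2 := hWm.2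
  rw [claimA N W hW0 hW2, claimB N W hW0 hW2]
  exact claimC N hN W hW0 hW2
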